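/- Every integral moving-phantom mechanism is truthful: for any integral phantom system Φ, any integral profile P, any voter i, and any integral misreport p_i*, the ℓ1 distance from p_i to the outcome on the true profile is at most the ℓ1 distance from p_i to the outcome on the misreported profile. -/

import Mathlib

/-- The median of `2n+1` naturals: the `(n+1)`-st smallest. -/
def medianN (n : ℕ) (v : Fin (2*n+1) → ℕ) : ℕ :=
  (Multiset.sort (Multiset.map v Finset.univ.val) (· ≤ ·)).getD n 0

/-- Merge `n` votes and `n+1` phantoms into one vector of `2n+1` values. -/
def mergeVN (n : ℕ) (x : Fin n → ℕ) (y : Fin (n+1) → ℕ) : Fin (2*n+1) → ℕ :=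
  fun i => if h : (i : ℕ) < n then x ⟨i, h⟩
           else y ⟨(i : ℕ) - n, by have := i.isLt; omega⟩

private lemma countP_sort_eq (m : ℕ) (v : Fin m → ℕ) (p : ℕ → Prop) [DecidablePred p] :
    (Multiset.sort (Multiset.map v Finset.univ.val) (· ≤ ·)).countP (fun x => decide (p x))
      = (Finset.univ.filter (fun i => p (v i))).card := by
  rw [← Multiset.coe_countP, Multiset.sort_eq, Multiset.countP_map]
  rfl

private lemma length_sort' (n : ℕ) (v : Fin (2*n+1) → ℕ) :
    (Multiset.sort (Multiset.map v Finset.univ.val) (· ≤ ·)).length = 2*n+1 := by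
  rw [Multiset.length_sort]; simp

private lemma medianN_eq_get (n : ℕ) (v : Fin (2*n+1) → ℕ) :
    medianN n v = (Multiset.sort (Multiset.map v Finset.univ.val) (· ≤ ·))[n]'(by
      rw [length_sort']; omega) := by
  rw [medianN, List.getD_eq_getElem]

private lemma sorted_le' (n : ℕ) (v : Fin (2*n+1) → ℕ) {i j : ℕ}
    (hij : i ≤ j) (hj : j < 2*n+1) :
    (Multiset.sort (Multiset.map v Finset.univ.val) (· ≤ ·))[i]'(by rw [length_sort']; omega)
      ≤ (Multiset.sort (Multiset.map v Finset.univ.val) (· ≤ ·))[j]'(by rw [length_sort']; omega) := by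
  rcases eq_or_lt_of_le hij with h | h
  · subst h; rfl
  · exact List.pairwise_iff_getElem.mp (Multiset.pairwise_sort _ _) i j _ _ h

/-- at least n+1 coordinates are ≤ the median -/
private lemma card_le_median (n : ℕ) (v : Fin (2*n+1) → ℕ) :
    n+1 ≤ (Finset.univ.filter (fun i => v i ≤ medianN n v)).card := by
  rw [← countP_sort_eq (2*n+1) v (fun x => x ≤ medianN n v)]
  set l := Multiset.sort (Multiset.map v Finset.univ.val) (· ≤ ·) with hl
  have hlen : l.length = 2*n+1 := length_sort' n v
  have : l.countP (fun x => decide (x ≤ medianN n v))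
      ≥ (l.take (n+1)).countP (fun x => decide (x ≤ medianN n v)) := by
    conv_lhs => rw [← List.take_append_drop (n+1) l]
    rw [List.countP_append]; omega
  refine le_trans ?_ this
  rw [List.countP_eq_length.mpr ?_, List.length_take, hlen]
  · omega
  · intro a ha
    obtain ⟨k, hk, rfl⟩ := List.getElem_of_mem ha
    rw [List.getElem_take] at *
    simp only [decide_eq_true_eq]
    rw [medianN_eq_get]
    exact sorted_le' n v (by rw [List.length_take, hlen] at hk; omega) (by omega)

/-- at least n+1 coordinates are ≥ the median -/
private lemma card_median_le (n : ℕ) (v : Fin (2*n+1) → ℕ) :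
    n+1 ≤ (Finset.univ.filter (fun i => medianN n v ≤ v i)).card := by
  rw [← countP_sort_eq (2*n+1) v (fun x => medianN n v ≤ x)]
  set l := Multiset.sort (Multiset.map v Finset.univ.val) (· ≤ ·) with hl
  have hlen : l.length = 2*n+1 := length_sort' n v
  have : l.countP (fun x => decide (medianN n v ≤ x))
      ≥ (l.drop n).countP (fun x => decide (medianN n v ≤ x)) := by
    conv_lhs => rw [← List.take_append_drop n l]
    rw [List.countP_append]; omega
  refine le_trans ?_ this
  rw [List.countP_eq_length.mpr ?_, List.length_drop, hlen]
  · omega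
  · intro a ha
    obtain ⟨k, hk, rfl⟩ := List.getElem_of_mem ha
    rw [List.getElem_drop] at *
    simp only [decide_eq_true_eq]
    rw [medianN_eq_get]
    exact sorted_le' n v (Nat.le_add_right n k) (by rw [List.length_drop, hlen] at hk; omega)

private lemma countP_add_countP_not' (l : List ℕ) (p : ℕ → Bool) :
    l.countP p + l.countP (fun x => !p x) = l.length := by
  induction l with
  | nil => simp
  | cons a t ih => by_cases h : p a <;> simp [List.countP_cons, h] <;> omega

private lemma le_median_of_card (n : ℕ) (v : Fin (2*n+1) → ℕ) (c : ℕ)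
    (h : n+1 ≤ (Finset.univ.filter (fun i => c ≤ v i)).card) : c ≤ medianN n v := by
  by_contra hlt
  push_neg at hlt
  rw [medianN_eq_get n v] at hlt
  rw [← countP_sort_eq (2*n+1) v (fun x => c ≤ x)] at h
  set l := Multiset.sort (Multiset.map v Finset.univ.val) (· ≤ ·) with hl
  have hlen : l.length = 2*n+1 := length_sort' n v
  have hlt' : l[n]'(by omega) < c := hlt
  clear hlt
  have h2 : l.countP (fun x => decide (c ≤ x)) + l.countP (fun x => !decide (c ≤ x)) = l.length :=
    countP_add_countP_not' _ _
  have h3 : n+1 ≤ (l.take (n+1)).countP (fun x => !decide (c ≤ x)) := by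
    rw [List.countP_eq_length.mpr ?_, List.length_take, hlen]
    · omega
    · intro a ha
      obtain ⟨k, hk, rfl⟩ := List.getElem_of_mem ha
      have hk1 : k < n+1 := by rw [List.length_take, hlen] at hk; omega
      rw [List.getElem_take]
      simp only [Bool.not_eq_true', decide_eq_false_iff_not, not_le]
      have : l[k]'(by omega) ≤ l[n]'(by omega) :=
        sorted_le' n v (by omega) (by omega)
      omega
  have h4 : (l.take (n+1)).countP (fun x => !decide (c ≤ x)) ≤ l.countP (fun x => !decide (c ≤ x)) := by
    conv_rhs => rw [← List.take_append_drop (n+1) l]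
    rw [List.countP_append]; omega
  omega

private lemma median_le_of_card (n : ℕ) (v : Fin (2*n+1) → ℕ) (c : ℕ)
    (h : n+1 ≤ (Finset.univ.filter (fun i => v i ≤ c)).card) : medianN n v ≤ c := by
  by_contra hlt
  push_neg at hlt
  rw [medianN_eq_get n v] at hlt
  rw [← countP_sort_eq (2*n+1) v (fun x => x ≤ c)] at h
  set l := Multiset.sort (Multiset.map v Finset.univ.val) (· ≤ ·) with hl
  have hlen : l.length = 2*n+1 := length_sort' n v
  have hlt' : c < l[n]'(by omega) := hlt
  clear hlt
  have h2 : l.countP (fun x => decide (x ≤ c)) + l.countP (fun x => !decide (x ≤ c)) = l.length :=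
    countP_add_countP_not' _ _
  have h3 : n+1 ≤ (l.drop n).countP (fun x => !decide (x ≤ c)) := by
    rw [List.countP_eq_length.mpr ?_, List.length_drop, hlen]
    · omega
    · intro a ha
      obtain ⟨k, hk, rfl⟩ := List.getElem_of_mem ha
      have hk1 : k < n+1 := by rw [List.length_drop, hlen] at hk; omega
      rw [List.getElem_drop]
      simp only [Bool.not_eq_true', decide_eq_false_iff_not, not_le]
      have : l[n]'(by omega) ≤ l[n+k]'(by omega) :=
        sorted_le' n v (Nat.le_add_right n k) (by omega)
      omega
  have h4 : (l.drop n).countP (fun x => !decide (x ≤ c)) ≤ l.countP (fun x => !decide (x ≤ c)) := by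
    conv_rhs => rw [← List.take_append_drop n l]
    rw [List.countP_append]; omega
  omega

private lemma medianN_mono (n : ℕ) (v w : Fin (2*n+1) → ℕ) (hvw : ∀ i, v i ≤ w i) :
    medianN n v ≤ medianN n w := by
  apply le_median_of_card
  refine le_trans (card_median_le n v) (Finset.card_le_card ?_)
  intro x hx
  simp only [Finset.mem_filter, Finset.mem_univ, true_and] at *
  exact le_trans hx (hvw x)

private lemma medianN_replace_up (n : ℕ) (v w : Fin (2*n+1) → ℕ) (i0 : Fin (2*n+1))
    (hvw : ∀ i, i ≠ i0 → v i = w i) (hlt : v i0 < medianN n v) :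
    medianN n v ≤ medianN n w := by
  apply le_median_of_card
  refine le_trans (card_median_le n v) (Finset.card_le_card ?_)
  intro x hx
  simp only [Finset.mem_filter, Finset.mem_univ, true_and] at *
  rcases eq_or_ne x i0 with rfl | hne
  · omega
  · rw [← hvw x hne]; exact hx

private lemma medianN_replace_down (n : ℕ) (v w : Fin (2*n+1) → ℕ) (i0 : Fin (2*n+1))
    (hvw : ∀ i, i ≠ i0 → v i = w i) (hlt : medianN n v < v i0) :
    medianN n w ≤ medianN n v := by
  apply median_le_of_card
  refine le_trans (card_le_median n v) (Finset.card_le_card ?_)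
  intro x hx
  simp only [Finset.mem_filter, Finset.mem_univ, true_and] at *
  rcases eq_or_ne x i0 with rfl | hne
  · omega
  · rw [← hvw x hne]; exact hx

private lemma l1_compare {m : ℕ} (p a c : Fin m → ℤ)
    (h1 : ∑ j, p j = ∑ j, a j) (h2 : ∑ j, p j = ∑ j, c j)
    (hkey : ∀ j, max (a j - p j) 0 ≤ max (c j - p j) 0) :
    ∑ j, |p j - a j| ≤ ∑ j, |p j - c j| := by
  have e1 : ∀ x y : ℤ, |x - y| = (x - y) + 2 * max (y - x) 0 := by
    intro x y
    rcases le_total x y with h | h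
    · rw [abs_of_nonpos (by omega), max_eq_left (by omega)]; ring
    · rw [abs_of_nonneg (by omega), max_eq_right (by omega)]; ring
  calc ∑ j, |p j - a j| = ∑ j, ((p j - a j) + 2 * max (a j - p j) 0) := by
        exact Finset.sum_congr rfl fun j _ => e1 _ _
    _ = (∑ j, (p j - a j)) + 2 * ∑ j, max (a j - p j) 0 := by
        rw [Finset.sum_add_distrib, Finset.mul_sum]
    _ = 2 * ∑ j, max (a j - p j) 0 := by
        rw [Finset.sum_sub_distrib, h1]; ring
    _ ≤ 2 * ∑ j, max (c j - p j) 0 := by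
        have := Finset.sum_le_sum (fun j (_ : j ∈ Finset.univ) => hkey j)
        omega
    _ = (∑ j, (p j - c j)) + 2 * ∑ j, max (c j - p j) 0 := by
        rw [Finset.sum_sub_distrib, h2]; ring
    _ = ∑ j, |p j - c j| := by
        rw [Finset.mul_sum, ← Finset.sum_add_distrib]
        exact (Finset.sum_congr rfl fun j _ => (e1 _ _).symm)

private lemma l1_compare' {m : ℕ} (p a c : Fin m → ℤ)
    (h1 : ∑ j, p j = ∑ j, a j) (h2 : ∑ j, p j = ∑ j, c j)
    (hkey : ∀ j, max (p j - a j) 0 ≤ max (p j - c j) 0) :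
    ∑ j, |p j - a j| ≤ ∑ j, |p j - c j| := by
  have e1 : ∀ x y : ℤ, |x - y| = (y - x) + 2 * max (x - y) 0 := by
    intro x y
    rcases le_total x y with h | h
    · rw [abs_of_nonpos (by omega), max_eq_right (by omega)]; ring
    · rw [abs_of_nonneg (by omega), max_eq_left (by omega)]; ring
  calc ∑ j, |p j - a j| = ∑ j, ((a j - p j) + 2 * max (p j - a j) 0) := by
        exact Finset.sum_congr rfl fun j _ => e1 _ _
    _ = (∑ j, (a j - p j)) + 2 * ∑ j, max (p j - a j) 0 := by
        rw [Finset.sum_add_distrib, Finset.mul_sum]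
    _ = 2 * ∑ j, max (p j - a j) 0 := by
        rw [Finset.sum_sub_distrib, h1]; ring
    _ ≤ 2 * ∑ j, max (p j - c j) 0 := by
        have := Finset.sum_le_sum (fun j (_ : j ∈ Finset.univ) => hkey j)
        omega
    _ = (∑ j, (c j - p j)) + 2 * ∑ j, max (p j - c j) 0 := by
        rw [Finset.sum_sub_distrib, h2]; ring
    _ = ∑ j, |p j - c j| := by
        rw [Finset.mul_sum, ← Finset.sum_add_distrib]
        exact (Finset.sum_congr rfl fun j _ => (e1 _ _).symm)

/-- Every integral moving-phantom mechanism is truthful: for any integral phantom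
system, any integral profile, voter `i`, integral misreport, and any normalization
times for the two profiles, the ℓ1 distance from voter `i`'s true vote to the vector
of medians on the true profile is at most the distance to the vector of medians on
the misreported profile. -/
theorem stmt4 (n m b : ℕ) (hn : 0 < n) (hm : 2 ≤ m) (hb : 0 < b)
    (φ : Fin (n+1) → Fin m → ℕ → ℕ)
    (hφmono : ∀ k j, Monotone (φ k j))
    (hφub : ∀ k j τ, φ k j τ ≤ b)
    (hφ0 : ∀ k j, φ k j 0 = 0)
    (hφz : ∀ k : Fin (n+1), ∀ j, (⌈((b : ℝ) * ((n : ℝ) - (k : ℕ))) / n⌉₊ : ℕ) ≤ φ k j (b*m*(n+1)))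
    (hstep : ∀ τ : ℕ, ∑ k, ∑ j, (φ k j (τ+1) - φ k j τ) ≤ 1)
    (P : Fin n → Fin m → ℕ)
    (hP : ∀ i, (∀ j, P i j ≤ b) ∧ ∑ j, P i j = b)
    (i : Fin n) (ps : Fin m → ℕ)
    (hps : (∀ j, ps j ≤ b) ∧ ∑ j, ps j = b)
    (τ τs : ℕ) (hτ : τ ≤ b*m*(n+1)) (hτs : τs ≤ b*m*(n+1))
    (hnorm : ∑ j, medianN n (mergeVN n (fun i' => P i' j) (fun k => φ k j τ)) = b)
    (hnorms : ∑ j, medianN n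
        (mergeVN n (fun i' => Function.update P i ps i' j) (fun k => φ k j τs)) = b) :
    ∑ j, |(P i j : ℤ) -
        (medianN n (mergeVN n (fun i' => P i' j) (fun k => φ k j τ)) : ℤ)| ≤
    ∑ j, |(P i j : ℤ) -
        (medianN n (mergeVN n (fun i' => Function.update P i ps i' j) (fun k => φ k j τs)) : ℤ)| := by
  -- abbreviations
  set A : Fin m → ℕ := fun j => medianN n (mergeVN n (fun i' => P i' j) (fun k => φ k j τ)) with hA
  set C : Fin m → ℕ := fun j =>
    medianN n (mergeVN n (fun i' => Function.update P i ps i' j) (fun k => φ k j τs)) with hC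
  -- intermediate medians: misreported profile at time τ, and at time τs
  set D : Fin m → ℕ := fun j =>
    medianN n (mergeVN n (fun i' => Function.update P i ps i' j) (fun k => φ k j τ)) with hD
  have hi : (i : ℕ) < 2*n+1 := by have := i.isLt; omega
  set i0 : Fin (2*n+1) := ⟨(i : ℕ), hi⟩ with hi0
  -- the true and misreported merged vectors at a common time t agree except at i0
  have hagree : ∀ (j : Fin m) (t : ℕ), ∀ idx : Fin (2*n+1), idx ≠ i0 →
      mergeVN n (fun i' => P i' j) (fun k => φ k j t) idx =
      mergeVN n (fun i' => Function.update P i ps i' j) (fun k => φ k j t) idx := by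
    intro j t idx hne
    unfold mergeVN
    by_cases h : (idx : ℕ) < n
    · simp only [dif_pos h]
      have : (⟨(idx : ℕ), h⟩ : Fin n) ≠ i := by
        intro heq
        apply hne
        apply Fin.ext
        simpa using congrArg (fun z : Fin n => (z : ℕ)) heq
      rw [Function.update_of_ne this]
    · simp only [dif_neg h]
  have hval : ∀ (j : Fin m) (t : ℕ),
      mergeVN n (fun i' => P i' j) (fun k => φ k j t) i0 = P i j := by
    intro j t
    unfold mergeVN
    simp only [hi0]
    rw [dif_pos i.isLt]
  -- time monotonicity of medians of the misreported profile
  have htime : ∀ (j : Fin m) (t₁ t₂ : ℕ), t₁ ≤ t₂ →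
      medianN n (mergeVN n (fun i' => Function.update P i ps i' j) (fun k => φ k j t₁)) ≤
      medianN n (mergeVN n (fun i' => Function.update P i ps i' j) (fun k => φ k j t₂)) := by
    intro j t₁ t₂ ht
    apply medianN_mono
    intro idx
    unfold mergeVN
    by_cases h : (idx : ℕ) < n
    · simp only [dif_pos h]; exact le_rfl
    · simp only [dif_neg h]; exact hφmono _ _ ht
  -- sum facts
  have hsum1 : ∑ j, ((P i j : ℤ)) = ∑ j, ((A j : ℤ)) := by
    rw [← Nat.cast_sum, ← Nat.cast_sum, (hP i).2, hnorm]
  have hsum2 : ∑ j, ((P i j : ℤ)) = ∑ j, ((C j : ℤ)) := by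
    rw [← Nat.cast_sum, ← Nat.cast_sum, (hP i).2, hnorms]
  rcases le_total τ τs with hside | hside
  · -- case τ ≤ τs : whenever P i j < A j we get A j ≤ C j
    have hkey : ∀ j, P i j < A j → A j ≤ C j := by
      intro j hj
      have s1 : A j ≤ D j := by
        apply medianN_replace_up n _ _ i0 (hagree j τ)
        rw [hval j τ]
        exact hj
      have s2 : D j ≤ C j := htime j τ τs hside
      omega
    apply l1_compare (fun j => (P i j : ℤ)) (fun j => (A j : ℤ)) (fun j => (C j : ℤ))
      hsum1 hsum2
    intro j
    rcases lt_or_ge (P i j) (A j) with h | h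
    · have := hkey j h
      exact max_le_max (by push_cast; omega) le_rfl
    · rw [max_eq_right (by push_cast; omega)]
      exact le_max_right _ _
  · -- case τs ≤ τ : whenever A j < P i j we get C j ≤ A j
    have hkey : ∀ j, A j < P i j → C j ≤ A j := by
      intro j hj
      have s1 : D j ≤ A j := by
        apply medianN_replace_down n _ _ i0 (hagree j τ)
        rw [hval j τ]
        exact hj
      have s2 : C j ≤ D j := htime j τs τ hside
      omega
    apply l1_compare' (fun j => (P i j : ℤ)) (fun j => (A j : ℤ)) (fun j => (C j : ℤ))
      hsum1 hsum2
    intro j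
    rcases lt_or_ge (A j) (P i j) with h | h
    · have := hkey j h
      exact max_le_max (by push_cast; omega) le_rfl
    · rw [max_eq_right (by push_cast; omega)]
      exact le_max_right _ _
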